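/- arXiv:1008.5338 — 2 statements merged into one kernel-verified Lean document; each statement's English description precedes it below -/
import Mathlib

section
/- Let (X,T) be a topological dynamical system and f ∈ C(X,ℝ). Then for each x ∈ X and ε > 0, P_s(T,f,x,ε) = sup_{𝒰} limsup_{n→∞} (1/n) log P_n(T,f,𝒰,T^{-n}W^s_ε(x,T)), where the supremum is over all finite open covers 𝒰 of X. -/
open Filter Set Topology MeasureTheory

noncomputable section

variable {X : Type*}

/-- Birkhoff sum `f_n(x) = ∑_{j<n} f(T^j x)`. -/
def birk (T : X → X) (f : X → ℝ) (n : ℕ) (x : X) : ℝ :=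
  ∑ j ∈ Finset.range n, f (T^[j] x)

/-- `P_n(T,f,δ,K)`: supremum of `∑_{x∈E} exp f_n(x)` over `(n,δ)`-separated
subsets `E ⊆ K`. -/
def sepPn [MetricSpace X] (T : X → X) (f : X → ℝ) (n : ℕ) (δ : ℝ) (K : Set X) : ℝ :=
  sSup { r : ℝ | ∃ E : Finset X, ↑E ⊆ K ∧
    (∀ x ∈ E, ∀ y ∈ E, x ≠ y → ∃ i < n, δ < dist (T^[i] x) (T^[i] y)) ∧
    r = ∑ x ∈ E, Real.exp (birk T f n x) }

/-- The topological pressure of `T` for the subset `K`: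
`P(T,f,K) = lim_{δ→0} limsup_n (1/n) log P_n(T,f,δ,K)`; since the expression is
nonincreasing in `δ`, the limit is the supremum over `δ > 0`. -/
def pres [MetricSpace X] (T : X → X) (f : X → ℝ) (K : Set X) : EReal :=
  ⨆ (δ : ℝ) (_ : 0 < δ), atTop.limsup fun n : ℕ =>
    ((Real.log (sepPn T f n δ K) / n : ℝ) : EReal)

/-- The `ε`-stable set `W^s_ε(x,T)`. -/
def epsStable [MetricSpace X] (T : X → X) (ε : ℝ) (x : X) : Set X :=
  { y | ∀ n : ℕ, dist (T^[n] x) (T^[n] y) ≤ ε }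

/-- The topological pressure of the preimages of the `ε`-stable set of `x`:
`P_s(T,f,x,ε) = lim_{δ→0} limsup_n (1/n) log P_n(T,f,δ,T^{-n}W^s_ε(x,T))`. -/
def Ps [MetricSpace X] (T : X → X) (f : X → ℝ) (x : X) (ε : ℝ) : EReal :=
  ⨆ (δ : ℝ) (_ : 0 < δ), atTop.limsup fun n : ℕ =>
    ((Real.log (sepPn T f n δ ((T^[n]) ⁻¹' epsStable T ε x)) / n : ℝ) : EReal)

/-- A finite open cover of `X`. -/
def IsOpenCover [TopologicalSpace X] (𝒰 : Finset (Set X)) : Prop :=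
  (∀ U ∈ 𝒰, IsOpen U) ∧ ⋃₀ (𝒰 : Set (Set X)) = univ

/-- A finite Borel cover of `X`. -/
def IsBorelCover [MeasurableSpace X] (𝒱 : Finset (Set X)) : Prop :=
  (∀ V ∈ 𝒱, MeasurableSet V) ∧ ⋃₀ (𝒱 : Set (Set X)) = univ

/-- `𝒱` refines the iterated cover `𝒰_0^{n-1} = ⋁_{i<n} T^{-i}𝒰`. -/
def RefinesIter (T : X → X) (𝒰 : Finset (Set X)) (n : ℕ) (𝒱 : Finset (Set X)) : Prop :=
  ∀ V ∈ 𝒱, ∃ g : Fin n → Set X, (∀ i, g i ∈ 𝒰) ∧ V ⊆ ⋂ i : Fin n, (T^[(i : ℕ)]) ⁻¹' g i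

/-- `P_n(T,f,𝒰,K)`: infimum over finite Borel covers `𝒱` refining `𝒰_0^{n-1}` of
`∑_{V∈𝒱} sup_{x ∈ V∩K} exp f_n(x)` (an empty summand contributes `0`, which is
`Real.sSup ∅`). -/
def covPn [MeasurableSpace X] (T : X → X) (f : X → ℝ) (𝒰 : Finset (Set X)) (n : ℕ)
    (K : Set X) : ℝ :=
  sInf { r : ℝ | ∃ 𝒱 : Finset (Set X), IsBorelCover 𝒱 ∧ RefinesIter T 𝒰 n 𝒱 ∧
    r = ∑ V ∈ 𝒱, sSup ((fun x => Real.exp (birk T f n x)) '' (V ∩ K)) }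

/-- A finite Borel partition of `X`. -/
def IsFinPartition [MeasurableSpace X] (α : Finset (Set X)) : Prop :=
  (∀ A ∈ α, MeasurableSet A) ∧ ⋃₀ (α : Set (Set X)) = univ ∧
    (α : Set (Set X)).Pairwise Disjoint

/-- `H_μ(⋁_{i<n} T^{-i}α)`, computed over all atoms `⋂_{i<n} T^{-i} A_i`. -/
def dynH [MeasurableSpace X] (μ : Measure X) (T : X → X) (α : Finset (Set X)) (n : ℕ) : ℝ :=
  ∑ g : Fin n → α, Real.negMulLog ((μ (⋂ i : Fin n, (T^[(i : ℕ)]) ⁻¹' (g i : Set X))).toReal)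

/-- `h_μ(T,α) = lim_n (1/n) H_μ(α_0^{n-1})`, which for an invariant measure equals
the infimum of `(1/n) H_μ(α_0^{n-1})` over `n ≥ 1`. -/
def entPart [MeasurableSpace X] (μ : Measure X) (T : X → X) (α : Finset (Set X)) : ℝ :=
  ⨅ n : ℕ, dynH μ T α (n + 1) / (n + 1 : ℝ)

/-- The measure-theoretic entropy `h_μ(T)`. -/
def mEnt [MeasurableSpace X] (μ : Measure X) (T : X → X) : EReal :=
  ⨆ (α : Finset (Set X)) (_ : IsFinPartition α), ((entPart μ T α : ℝ) : EReal)

/-- The measure-theoretic pressure `P_μ(T,f) = h_μ(T) + ∫ f dμ`. -/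
def mPres [MeasurableSpace X] (μ : Measure X) (T : X → X) (f : X → ℝ) : EReal :=
  mEnt μ T + ((∫ x, f x ∂μ : ℝ) : EReal)

/-- The stable set `W^s(x,T)`. -/
def stableSet [MetricSpace X] (T : X → X) (x : X) : Set X :=
  { y | Tendsto (fun n : ℕ => dist (T^[n] x) (T^[n] y)) atTop (𝓝 0) }

/-- A Cantor set: a nonempty compact perfect totally disconnected set. -/
def IsCantorSet [TopologicalSpace X] (C : Set X) : Prop :=
  C.Nonempty ∧ IsCompact C ∧ Perfect C ∧ IsTotallyDisconnected C

/-- A weakly mixing set for `T`. -/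
def IsWeaklyMixingSet [TopologicalSpace X] (T : X → X) (A : Set X) : Prop :=
  A.Nonempty ∧ IsClosed A ∧
  ∃ B : Set X, B ⊆ A ∧
    (∃ C : ℕ → Set X, (∀ n, IsCantorSet (C n)) ∧ B = ⋃ n, C n) ∧
    closure B = A ∧
    ∀ C : Set X, C ⊆ B → IsCantorSet C →
      ∀ g : C → X, Continuous g → (∀ c : C, g c ∈ A) →
        ∃ φ : ℕ → ℕ, StrictMono φ ∧
          ∀ c : C, Tendsto (fun i => T^[φ i] (c : X)) atTop (𝓝 (g c))

section stmt4helpers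

set_option linter.unusedSectionVars false

/-- auxiliary: sum over an image is at most the sum of pulled-back values,
for nonnegative summands. -/
lemma sum_image_le_sum {α β : Type*} [DecidableEq α] [DecidableEq β] (s : Finset α) (g : α → β) (h : β → ℝ)
    (h0 : ∀ b, 0 ≤ h b) : ∑ b ∈ s.image g, h b ≤ ∑ a ∈ s, h (g a) := by
  induction s using Finset.induction_on with
  | empty => simp
  | insert _ _ hx ih =>
    rename_i a t
    rw [Finset.image_insert, Finset.sum_insert hx]
    by_cases hga : g a ∈ t.image g
    · rw [Finset.insert_eq_self.2 hga]
      exact le_add_of_nonneg_of_le (h0 _) ih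
    · rw [Finset.sum_insert hga]
      exact add_le_add_right ih _


variable [MetricSpace X] [CompactSpace X]

lemma birk_abs_le (T : X → X) (f : C(X, ℝ)) (n : ℕ) (x : X) :
    |birk T f n x| ≤ n * ‖f‖ := by
  calc |birk T f n x| ≤ ∑ j ∈ Finset.range n, |f (T^[j] x)| :=
        Finset.abs_sum_le_sum_abs _ _
    _ ≤ ∑ j ∈ Finset.range n, ‖f‖ := by
        refine Finset.sum_le_sum fun j _ => ?_
        simpa [Real.norm_eq_abs] using f.norm_coe_le_norm (T^[j] x)
    _ = n * ‖f‖ := by simp [mul_comm]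

lemma exp_birk_le (T : X → X) (f : C(X, ℝ)) (n : ℕ) (x : X) :
    Real.exp (birk T f n x) ≤ Real.exp (n * ‖f‖) :=
  Real.exp_le_exp.2 ((abs_le.1 (birk_abs_le T f n x)).2)

lemma exp_neg_le_exp_birk (T : X → X) (f : C(X, ℝ)) (n : ℕ) (x : X) :
    Real.exp (-(n * ‖f‖)) ≤ Real.exp (birk T f n x) :=
  Real.exp_le_exp.2 (abs_le.1 (birk_abs_le T f n x)).1

/-- Cardinality bound for `(n,δ)`-separated sets in a compact space. -/
lemma sep_card_bound (T : X → X) {δ : ℝ} (hδ : 0 < δ) (n : ℕ) :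
    ∃ N : ℕ, ∀ E : Finset X,
      (∀ x ∈ E, ∀ y ∈ E, x ≠ y → ∃ i < n, δ < dist (T^[i] x) (T^[i] y)) → E.card ≤ N := by
  obtain ⟨t, _, htfin, htcov⟩ :=
    (isCompact_univ : IsCompact (univ : Set (Fin n → X))).finite_cover_balls (e := δ / 2)
      (half_pos hδ)
  refine ⟨htfin.toFinset.card, fun E hE => ?_⟩
  set Φ : X → (Fin n → X) := fun z i => T^[(i : ℕ)] z with hΦ
  have hball : ∀ z : X, ∃ c ∈ htfin.toFinset, Φ z ∈ Metric.ball c (δ / 2) := by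
    intro z
    have := htcov (mem_univ (Φ z))
    simp only [mem_iUnion, exists_prop] at this
    obtain ⟨c, hc, hc2⟩ := this
    exact ⟨c, htfin.mem_toFinset.2 hc, hc2⟩
  choose c hc hc2 using hball
  refine Finset.card_le_card_of_injOn (fun z => c z) (fun z _ => hc z) ?_
  intro a ha b hb hab
  by_contra hne
  obtain ⟨i, hi, hdist⟩ := hE a ha b hb hne
  have h1 : dist (Φ a) (Φ b) < δ := by
    have := dist_triangle (Φ a) (c a) (Φ b)
    have h2 := hc2 a
    have h3 := hc2 b
    simp only at hab
    rw [hab] at h2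
    rw [Metric.mem_ball] at h2 h3
    rw [dist_comm (Φ b) (c b)] at h3
    calc dist (Φ a) (Φ b) ≤ dist (Φ a) (c b) + dist (c b) (Φ b) := dist_triangle _ _ _
      _ < δ / 2 + δ / 2 := add_lt_add h2 h3
      _ = δ := add_halves δ
  have h2 : dist (T^[i] a) (T^[i] b) ≤ dist (Φ a) (Φ b) := by
    have := dist_le_pi_dist (Φ a) (Φ b) ⟨i, hi⟩
    simpa [hΦ] using this
  linarith

lemma sepPn_bddAbove (T : X → X) (f : C(X, ℝ)) (n : ℕ) {δ : ℝ} (hδ : 0 < δ) (K : Set X) :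
    BddAbove { r : ℝ | ∃ E : Finset X, ↑E ⊆ K ∧
      (∀ x ∈ E, ∀ y ∈ E, x ≠ y → ∃ i < n, δ < dist (T^[i] x) (T^[i] y)) ∧
      r = ∑ x ∈ E, Real.exp (birk T f n x) } := by
  obtain ⟨N, hN⟩ := sep_card_bound T hδ n
  refine ⟨N * Real.exp (n * ‖f‖), ?_⟩
  rintro r ⟨E, hEK, hsep, rfl⟩
  calc ∑ x ∈ E, Real.exp (birk T f n x) ≤ ∑ _x ∈ E, Real.exp (n * ‖f‖) :=
        Finset.sum_le_sum fun x _ => exp_birk_le T f n x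
    _ = (E.card : ℝ) * Real.exp (n * ‖f‖) := by
        simp [Finset.sum_const, nsmul_eq_mul]
    _ ≤ (N : ℝ) * Real.exp (n * ‖f‖) := by
        have : (E.card : ℝ) ≤ (N : ℝ) := by exact_mod_cast hN E hsep
        exact mul_le_mul_of_nonneg_right this (Real.exp_pos _).le

lemma sum_le_sepPn (T : X → X) (f : C(X, ℝ)) {n : ℕ} {δ : ℝ} (hδ : 0 < δ) {K : Set X}
    {E : Finset X} (hEK : ↑E ⊆ K)
    (hsep : ∀ x ∈ E, ∀ y ∈ E, x ≠ y → ∃ i < n, δ < dist (T^[i] x) (T^[i] y)) :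
    ∑ x ∈ E, Real.exp (birk T f n x) ≤ sepPn T f n δ K :=
  le_csSup (sepPn_bddAbove T f n hδ K) ⟨E, hEK, hsep, rfl⟩

lemma exp_le_sepPn (T : X → X) (f : C(X, ℝ)) {n : ℕ} {δ : ℝ} (hδ : 0 < δ) {K : Set X}
    {y : X} (hy : y ∈ K) : Real.exp (birk T f n y) ≤ sepPn T f n δ K := by
  have h := sum_le_sepPn T f hδ (n := n) (E := {y}) (by simpa using hy) ?_
  · simpa using h
  · intro a ha b hb hab
    simp only [Finset.mem_singleton] at ha hb
    exact absurd (ha.trans hb.symm) hab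

lemma sepPn_pos (T : X → X) (f : C(X, ℝ)) {n : ℕ} {δ : ℝ} (hδ : 0 < δ) {K : Set X}
    (hK : K.Nonempty) : 0 < sepPn T f n δ K := by
  obtain ⟨y, hy⟩ := hK
  exact lt_of_lt_of_le (Real.exp_pos _) (exp_le_sepPn T f hδ hy)

lemma img_bddAbove (T : X → X) (f : C(X, ℝ)) (n : ℕ) (S : Set X) :
    BddAbove ((fun x => Real.exp (birk T f n x)) '' S) := by
  refine ⟨Real.exp (n * ‖f‖), ?_⟩
  rintro r ⟨y, -, rfl⟩
  exact exp_birk_le T f n y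

lemma sSup_img_nonneg (T : X → X) (f : C(X, ℝ)) (n : ℕ) (S : Set X) :
    0 ≤ sSup ((fun x => Real.exp (birk T f n x)) '' S) := by
  refine Real.sSup_nonneg ?_
  rintro r ⟨y, -, rfl⟩
  exact (Real.exp_pos _).le

open Classical in
/-- The cover of `X` by atoms `⋂_i T^{-i} (g i)` of `𝒰_0^{n-1}`. -/
def atomCover (T : X → X) (𝒰 : Finset (Set X)) (n : ℕ) : Finset (Set X) :=
  Finset.image (fun g : Fin n → {U // U ∈ 𝒰} => ⋂ i : Fin n, (T^[(i : ℕ)]) ⁻¹' (g i : Set X))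
    Finset.univ

variable [MeasurableSpace X] [BorelSpace X]

lemma atomCover_borel {T : X → X} (hT : Continuous T) {𝒰 : Finset (Set X)}
    (h𝒰 : IsOpenCover 𝒰) (n : ℕ) : ∀ A ∈ atomCover T 𝒰 n, MeasurableSet A := by
  intro A hA
  simp only [atomCover, Finset.mem_image, Finset.mem_univ, true_and] at hA
  obtain ⟨g, rfl⟩ := hA
  exact MeasurableSet.iInter fun i =>
    (((h𝒰.1 _ (g i).2).preimage (hT.iterate (i : ℕ)))).measurableSet

lemma atomCover_covers {T : X → X} {𝒰 : Finset (Set X)} (h𝒰 : IsOpenCover 𝒰) (n : ℕ) :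
    ⋃₀ ((atomCover T 𝒰 n : Finset (Set X)) : Set (Set X)) = univ := by
  refine eq_univ_of_forall fun z => ?_
  have hz : ∀ i : Fin n, ∃ U : {U // U ∈ 𝒰}, T^[(i : ℕ)] z ∈ (U : Set X) := by
    intro i
    have : T^[(i : ℕ)] z ∈ ⋃₀ (𝒰 : Set (Set X)) := h𝒰.2 ▸ mem_univ _
    obtain ⟨U, hU, hzU⟩ := this
    exact ⟨⟨U, hU⟩, hzU⟩
  choose g hg using hz
  refine ⟨⋂ i : Fin n, (T^[(i : ℕ)]) ⁻¹' (g i : Set X), ?_, ?_⟩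
  · simp only [atomCover, Finset.coe_image, Finset.coe_univ, Set.image_univ, mem_range]
    exact ⟨g, rfl⟩
  · exact mem_iInter.2 fun i => hg i

lemma atomCover_refines (T : X → X) (𝒰 : Finset (Set X)) (n : ℕ) :
    RefinesIter T 𝒰 n (atomCover T 𝒰 n) := by
  intro A hA
  simp only [atomCover, Finset.mem_image, Finset.mem_univ, true_and] at hA
  obtain ⟨g, rfl⟩ := hA
  exact ⟨fun i => (g i : Set X), fun i => (g i).2, subset_rfl⟩

lemma covSet_nonempty {T : X → X} (hT : Continuous T) {𝒰 : Finset (Set X)}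
    (h𝒰 : IsOpenCover 𝒰) (f : C(X, ℝ)) (n : ℕ) (K : Set X) :
    { r : ℝ | ∃ 𝒱 : Finset (Set X), IsBorelCover 𝒱 ∧ RefinesIter T 𝒰 n 𝒱 ∧
      r = ∑ V ∈ 𝒱, sSup ((fun x => Real.exp (birk T f n x)) '' (V ∩ K)) }.Nonempty :=
  ⟨_, atomCover T 𝒰 n, ⟨atomCover_borel hT h𝒰 n, atomCover_covers h𝒰 n⟩,
    atomCover_refines T 𝒰 n, rfl⟩

lemma covSet_bddBelow (T : X → X) (f : C(X, ℝ)) (𝒰 : Finset (Set X)) (n : ℕ) (K : Set X) :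
    BddBelow { r : ℝ | ∃ 𝒱 : Finset (Set X), IsBorelCover 𝒱 ∧ RefinesIter T 𝒰 n 𝒱 ∧
      r = ∑ V ∈ 𝒱, sSup ((fun x => Real.exp (birk T f n x)) '' (V ∩ K)) } := by
  refine ⟨0, ?_⟩
  rintro r ⟨𝒱, -, -, rfl⟩
  exact Finset.sum_nonneg fun V _ => sSup_img_nonneg T f n _

lemma covPn_le (T : X → X) (f : C(X, ℝ)) {𝒰 : Finset (Set X)} {n : ℕ} {K : Set X}
    {𝒱 : Finset (Set X)} (h1 : IsBorelCover 𝒱) (h2 : RefinesIter T 𝒰 n 𝒱) :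
    covPn T f 𝒰 n K ≤ ∑ V ∈ 𝒱, sSup ((fun x => Real.exp (birk T f n x)) '' (V ∩ K)) :=
  csInf_le (covSet_bddBelow T f 𝒰 n K) ⟨𝒱, h1, h2, rfl⟩

lemma exp_neg_le_covPn {T : X → X} (hT : Continuous T) (f : C(X, ℝ)) {𝒰 : Finset (Set X)}
    (h𝒰 : IsOpenCover 𝒰) {n : ℕ} {K : Set X} (hK : K.Nonempty) :
    Real.exp (-(n * ‖f‖)) ≤ covPn T f 𝒰 n K := by
  refine le_csInf (covSet_nonempty hT h𝒰 f n K) ?_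
  rintro r ⟨𝒱, h𝒱, -, rfl⟩
  obtain ⟨y, hy⟩ := hK
  have hyV : ∃ V ∈ 𝒱, y ∈ V := by
    have : y ∈ ⋃₀ (𝒱 : Set (Set X)) := h𝒱.2 ▸ mem_univ _
    obtain ⟨V, hV, hyV⟩ := this
    exact ⟨V, hV, hyV⟩
  obtain ⟨V, hV, hyV⟩ := hyV
  calc Real.exp (-(n * ‖f‖)) ≤ Real.exp (birk T f n y) := exp_neg_le_exp_birk T f n y
    _ ≤ sSup ((fun x => Real.exp (birk T f n x)) '' (V ∩ K)) :=
        le_csSup (img_bddAbove T f n _) ⟨y, ⟨hyV, hy⟩, rfl⟩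
    _ ≤ ∑ W ∈ 𝒱, sSup ((fun x => Real.exp (birk T f n x)) '' (W ∩ K)) :=
        Finset.single_le_sum (f := fun W => sSup ((fun x => Real.exp (birk T f n x)) '' (W ∩ K)))
          (fun W _ => sSup_img_nonneg T f n _) hV

lemma covPn_pos {T : X → X} (hT : Continuous T) (f : C(X, ℝ)) {𝒰 : Finset (Set X)}
    (h𝒰 : IsOpenCover 𝒰) {n : ℕ} {K : Set X} (hK : K.Nonempty) :
    0 < covPn T f 𝒰 n K :=
  lt_of_lt_of_le (Real.exp_pos _) (exp_neg_le_covPn hT f h𝒰 hK)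

/-- Direction 1 key: if every member of `𝒰` has diameter at most `δ`, then
`sepPn δ ≤ covPn 𝒰`. -/
lemma sepPn_le_covPn [MeasurableSpace X] [BorelSpace X] {T : X → X} (hT : Continuous T)
    (f : C(X, ℝ)) {𝒰 : Finset (Set X)} (h𝒰 : IsOpenCover 𝒰) {δ : ℝ} (hδ : 0 < δ)
    (hmesh : ∀ U ∈ 𝒰, ∀ a ∈ U, ∀ b ∈ U, dist a b ≤ δ) (n : ℕ) (K : Set X) :
    sepPn T f n δ K ≤ covPn T f 𝒰 n K := by
  classical
  refine Real.sSup_le ?_ ?_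
  swap
  · refine le_csInf (covSet_nonempty hT h𝒰 f n K) ?_
    rintro r ⟨𝒱, -, -, rfl⟩
    exact Finset.sum_nonneg fun V _ => sSup_img_nonneg T f n _
  rintro r ⟨E, hEK, hsep, rfl⟩
  refine le_csInf (covSet_nonempty hT h𝒰 f n K) ?_
  rintro r ⟨𝒱, h𝒱, href, rfl⟩
  -- choose for each point of X a member of 𝒱 containing it
  have hch : ∀ z : X, ∃ V, V ∈ 𝒱 ∧ z ∈ V := by
    intro z
    have : z ∈ ⋃₀ (𝒱 : Set (Set X)) := h𝒱.2 ▸ mem_univ _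
    obtain ⟨V, hV, hzV⟩ := this
    exact ⟨V, hV, hzV⟩
  choose c hc1 hc2 using hch
  have hinj : ∀ a ∈ E, ∀ b ∈ E, c a = c b → a = b := by
    intro a ha b hb hab
    by_contra hne
    obtain ⟨i, hi, hdist⟩ := hsep a ha b hb hne
    obtain ⟨g, hg𝒰, hgsub⟩ := href (c a) (hc1 a)
    have hza : a ∈ ⋂ j : Fin n, (T^[(j : ℕ)]) ⁻¹' g j := hgsub (hc2 a)
    have hzb : b ∈ ⋂ j : Fin n, (T^[(j : ℕ)]) ⁻¹' g j := hgsub (hab ▸ hc2 b)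
    have hia := mem_iInter.1 hza ⟨i, hi⟩
    have hib := mem_iInter.1 hzb ⟨i, hi⟩
    have := hmesh (g ⟨i, hi⟩) (hg𝒰 ⟨i, hi⟩) _ hia _ hib
    exact absurd this (not_le.2 hdist)
  calc ∑ x ∈ E, Real.exp (birk T f n x)
      ≤ ∑ x ∈ E, sSup ((fun z => Real.exp (birk T f n z)) '' (c x ∩ K)) := by
        refine Finset.sum_le_sum fun x hx => ?_
        exact le_csSup (img_bddAbove T f n _) ⟨x, ⟨hc2 x, hEK hx⟩, rfl⟩
    _ = ∑ V ∈ E.image c, sSup ((fun z => Real.exp (birk T f n z)) '' (V ∩ K)) :=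
        (Finset.sum_image (f := fun V => sSup ((fun z => Real.exp (birk T f n z)) '' (V ∩ K))) (g := c) hinj).symm
    _ ≤ ∑ V ∈ 𝒱, sSup ((fun z => Real.exp (birk T f n z)) '' (V ∩ K)) := by
        refine Finset.sum_le_sum_of_subset_of_nonneg ?_ fun V _ _ => sSup_img_nonneg T f n _
        intro V hV
        obtain ⟨x, hx, rfl⟩ := Finset.mem_image.1 hV
        exact hc1 x

/-- Existence of a finite open cover of mesh at most `δ`. -/
lemma exists_mesh_cover {δ : ℝ} (hδ : 0 < δ) :
    ∃ 𝒰 : Finset (Set X), IsOpenCover 𝒰 ∧ ∀ U ∈ 𝒰, ∀ a ∈ U, ∀ b ∈ U, dist a b ≤ δ := by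
  classical
  obtain ⟨t, -, htfin, htcov⟩ :=
    (isCompact_univ : IsCompact (univ : Set X)).finite_cover_balls (e := δ / 3)
      (by linarith)
  refine ⟨htfin.toFinset.image (fun z => Metric.ball z (δ / 3)), ⟨?_, ?_⟩, ?_⟩
  · intro U hU
    obtain ⟨z, -, rfl⟩ := Finset.mem_image.1 hU
    exact Metric.isOpen_ball
  · refine eq_univ_of_forall fun z => ?_
    have := htcov (mem_univ z)
    simp only [mem_iUnion, exists_prop] at this
    obtain ⟨y, hy, hzy⟩ := this
    exact ⟨Metric.ball y (δ / 3), by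
      simp only [Finset.coe_image, mem_image]
      exact ⟨y, by simpa using htfin.mem_toFinset.2 hy, rfl⟩, hzy⟩
  · intro U hU a ha b hb
    obtain ⟨z, -, rfl⟩ := Finset.mem_image.1 hU
    rw [Metric.mem_ball] at ha hb
    calc dist a b ≤ dist a z + dist z b := dist_triangle _ _ _
      _ ≤ δ / 3 + δ / 3 := add_le_add ha.le (by rw [dist_comm]; exact hb.le)
      _ ≤ δ := by linarith

/-- Existence of a maximal `(n,δ)`-separated subset of `K`; maximality gives spanning. -/
lemma exists_max_sep (T : X → X) {δ : ℝ} (hδ : 0 < δ) (n : ℕ) (K : Set X) :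
    ∃ E : Finset X, ↑E ⊆ K ∧
      (∀ x ∈ E, ∀ y ∈ E, x ≠ y → ∃ i < n, δ < dist (T^[i] x) (T^[i] y)) ∧
      ∀ y ∈ K, ∃ x ∈ E, ∀ i < n, dist (T^[i] x) (T^[i] y) ≤ δ := by
  classical
  obtain ⟨N, hN⟩ := sep_card_bound T hδ n
  set S : Set ℕ := { m | ∃ E : Finset X, ↑E ⊆ K ∧
    (∀ x ∈ E, ∀ y ∈ E, x ≠ y → ∃ i < n, δ < dist (T^[i] x) (T^[i] y)) ∧ E.card = m } with hS
  have hS0 : 0 ∈ S := ⟨∅, by simp, by simp, by simp⟩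
  have hSb : BddAbove S := by
    refine ⟨N, ?_⟩
    rintro m ⟨E, -, hsep, rfl⟩
    exact hN E hsep
  obtain ⟨E, hEK, hsep, hcard⟩ := Nat.sSup_mem ⟨0, hS0⟩ hSb
  refine ⟨E, hEK, hsep, ?_⟩
  intro y hy
  by_contra hcon
  push_neg at hcon
  have hyE : y ∉ E := by
    intro hyE
    obtain ⟨i, -, hlt⟩ := hcon y hyE
    simp at hlt
    linarith
  have hsep' : ∀ a ∈ insert y E, ∀ b ∈ insert y E, a ≠ b →
      ∃ i < n, δ < dist (T^[i] a) (T^[i] b) := by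
    intro a ha b hb hab
    rcases Finset.mem_insert.1 ha with ha' | ha'
    · rcases Finset.mem_insert.1 hb with hb' | hb'
      · exact absurd (ha'.trans hb'.symm) hab
      · subst ha'
        obtain ⟨i, hi, hlt⟩ := hcon b hb'
        exact ⟨i, hi, by rwa [dist_comm]⟩
    · rcases Finset.mem_insert.1 hb with hb' | hb'
      · subst hb'
        exact hcon a ha'
      · exact hsep a ha' b hb' hab
  have hmem : (insert y E).card ∈ S :=
    ⟨insert y E, by
      rw [Finset.coe_insert]
      exact insert_subset hy hEK, hsep', rfl⟩
  have := le_csSup hSb hmem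
  rw [Finset.card_insert_of_notMem hyE, hcard] at this
  omega

/-- Direction 2 key estimate. -/
lemma covPn_le_exp_mul_sepPn {T : X → X} (hT : Continuous T) (f : C(X, ℝ))
    {𝒰 : Finset (Set X)} (h𝒰 : IsOpenCover 𝒰) {η : ℝ} (hη : 0 < η) :
    ∃ δ' > 0, ∀ (n : ℕ) (K : Set X), K.Nonempty →
      covPn T f 𝒰 n K ≤ Real.exp (n * η) * sepPn T f n δ' K := by
  classical
  obtain ⟨δL, hδL, hLeb⟩ := lebesgue_number_lemma_of_metric_sUnion
    (isCompact_univ : IsCompact (univ : Set X)) (fun U hU => h𝒰.1 U hU) h𝒰.2.ge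
  obtain ⟨ρ, hρ, hunif⟩ := Metric.uniformContinuous_iff.1
    (CompactSpace.uniformContinuous_of_continuous f.continuous) η hη
  set δ' : ℝ := min δL ρ / 2 with hδ'def
  have hδ' : 0 < δ' := by positivity
  have hmin1 := min_le_left δL ρ
  have hmin2 := min_le_right δL ρ
  have hδ'L : δ' < δL := by rw [hδ'def]; linarith
  have hδ'ρ : δ' < ρ := by rw [hδ'def]; linarith
  refine ⟨δ', hδ', fun n K hK => ?_⟩
  obtain ⟨E, hEK, hsep, hspan⟩ := exists_max_sep T hδ' n K
  -- Lebesgue choice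
  have hchoice : ∀ z : X, ∃ U, U ∈ 𝒰 ∧ Metric.ball z δL ⊆ U := by
    intro z
    obtain ⟨U, hU, hsub⟩ := hLeb z (mem_univ z)
    exact ⟨U, hU, hsub⟩
  choose Uz hUz1 hUz2 using hchoice
  set V : X → Set X := fun x =>
    ⋂ i : Fin n, (T^[(i : ℕ)]) ⁻¹' (Uz (T^[(i : ℕ)] x) ∩ Metric.ball (T^[(i : ℕ)] x) ρ)
    with hVdef
  set W : Set X := ⋃ x ∈ (E : Set X), V x with hWdef
  have hKW : ∀ y ∈ K, ∃ x ∈ E, y ∈ V x := by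
    intro y hy
    obtain ⟨x, hxE, hx⟩ := hspan y hy
    refine ⟨x, hxE, mem_iInter.2 fun i => ?_⟩
    have hd := hx (i : ℕ) i.2
    refine mem_preimage.2 ⟨hUz2 (T^[(i : ℕ)] x) ?_, ?_⟩
    · exact Metric.mem_ball.2 (by rw [dist_comm]; exact lt_of_le_of_lt hd hδ'L)
    · exact Metric.mem_ball.2 (by rw [dist_comm]; exact lt_of_le_of_lt hd hδ'ρ)
  have hVmeas : ∀ x : X, MeasurableSet (V x) := by
    intro x
    refine MeasurableSet.iInter fun i => ?_
    exact (((h𝒰.1 _ (hUz1 (T^[(i : ℕ)] x))).inter Metric.isOpen_ball).preimage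
      (hT.iterate (i : ℕ))).measurableSet
  have hWmeas : MeasurableSet W :=
    E.finite_toSet.measurableSet_biUnion fun x _ => hVmeas x
  set 𝒱 : Finset (Set X) := E.image V ∪ (atomCover T 𝒰 n).image (fun A => A \ W) with h𝒱def
  have h𝒱borel : IsBorelCover 𝒱 := by
    constructor
    · intro V' hV'
      rcases Finset.mem_union.1 hV' with h | h
      · obtain ⟨x, -, rfl⟩ := Finset.mem_image.1 h
        exact hVmeas x
      · obtain ⟨A, hA, rfl⟩ := Finset.mem_image.1 h
        exact (atomCover_borel hT h𝒰 n A hA).diff hWmeas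
    · refine eq_univ_of_forall fun z => ?_
      by_cases hz : z ∈ W
      · obtain ⟨x, hx, hzx⟩ := mem_iUnion₂.1 hz
        exact ⟨V x, Finset.mem_coe.2 (Finset.mem_union_left _
          (Finset.mem_image_of_mem V hx)), hzx⟩
      · have : z ∈ ⋃₀ ((atomCover T 𝒰 n : Finset (Set X)) : Set (Set X)) :=
          (atomCover_covers h𝒰 n) ▸ mem_univ z
        obtain ⟨A, hA, hzA⟩ := this
        exact ⟨A \ W, Finset.mem_coe.2 (Finset.mem_union_right _
          (Finset.mem_image_of_mem _ hA)), hzA, hz⟩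
  have h𝒱ref : RefinesIter T 𝒰 n 𝒱 := by
    intro V' hV'
    rcases Finset.mem_union.1 hV' with h | h
    · obtain ⟨x, -, rfl⟩ := Finset.mem_image.1 h
      refine ⟨fun i => Uz (T^[(i : ℕ)] x), fun i => hUz1 _, ?_⟩
      exact iInter_mono fun i => preimage_mono inter_subset_left
    · obtain ⟨A, hA, rfl⟩ := Finset.mem_image.1 h
      obtain ⟨g, hg, hsub⟩ := atomCover_refines T 𝒰 n A hA
      exact ⟨g, hg, diff_subset.trans hsub⟩
  -- the oscillation bound on atoms
  have hosc : ∀ x : X, ∀ y ∈ V x, birk T f n y ≤ birk T f n x + n * η := by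
    intro x y hy
    have hterm : ∀ j ∈ Finset.range n, f (T^[j] y) ≤ f (T^[j] x) + η := by
      intro j hj
      rw [Finset.mem_range] at hj
      have := mem_iInter.1 hy ⟨j, hj⟩
      have hball : T^[j] y ∈ Metric.ball (T^[j] x) ρ := (mem_preimage.1 this).2
      have := hunif (a := T^[j] y) (b := T^[j] x) (Metric.mem_ball.1 hball)
      rw [Real.dist_eq] at this
      have := (abs_lt.1 this).2
      linarith
    calc birk T f n y ≤ ∑ j ∈ Finset.range n, (f (T^[j] x) + η) :=
          Finset.sum_le_sum hterm
      _ = birk T f n x + n * η := by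
          rw [Finset.sum_add_distrib]
          simp [birk, mul_comm]
  -- put everything together
  have sum_t_zero : ∑ A ∈ (atomCover T 𝒰 n).image (fun A => A \ W),
      sSup ((fun z => Real.exp (birk T f n z)) '' (A ∩ K)) = 0 := by
    refine Finset.sum_eq_zero fun B hB => ?_
    obtain ⟨A, -, rfl⟩ := Finset.mem_image.1 hB
    have : (A \ W) ∩ K = ∅ := by
      refine eq_empty_of_forall_notMem fun z hz => ?_
      obtain ⟨x, hx, hzx⟩ := hKW z hz.2
      exact hz.1.2 (mem_iUnion₂.2 ⟨x, hx, hzx⟩)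
    rw [this, image_empty, Real.sSup_empty]
  calc covPn T f 𝒰 n K
      ≤ ∑ V' ∈ 𝒱, sSup ((fun z => Real.exp (birk T f n z)) '' (V' ∩ K)) :=
        covPn_le T f h𝒱borel h𝒱ref
    _ ≤ ∑ V' ∈ E.image V, sSup ((fun z => Real.exp (birk T f n z)) '' (V' ∩ K))
        + ∑ A ∈ (atomCover T 𝒰 n).image (fun A => A \ W),
            sSup ((fun z => Real.exp (birk T f n z)) '' (A ∩ K)) := by
        have h2 := Finset.sum_union_inter (s₁ := E.image V)
          (s₂ := (atomCover T 𝒰 n).image (fun A => A \ W))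
          (f := fun V' => sSup ((fun z => Real.exp (birk T f n z)) '' (V' ∩ K)))
        have h3 : 0 ≤ ∑ V' ∈ E.image V ∩ (atomCover T 𝒰 n).image (fun A => A \ W),
            sSup ((fun z => Real.exp (birk T f n z)) '' (V' ∩ K)) :=
          Finset.sum_nonneg fun V' _ => sSup_img_nonneg T f n _
        rw [h𝒱def]
        linarith
    _ = ∑ V' ∈ E.image V, sSup ((fun z => Real.exp (birk T f n z)) '' (V' ∩ K)) := by
        rw [sum_t_zero, add_zero]
    _ ≤ ∑ x ∈ E, sSup ((fun z => Real.exp (birk T f n z)) '' (V x ∩ K)) :=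
        sum_image_le_sum E V _ (fun B => sSup_img_nonneg T f n _)
    _ ≤ ∑ x ∈ E, Real.exp (birk T f n x + n * η) := by
        refine Finset.sum_le_sum fun x hx => ?_
        refine Real.sSup_le ?_ (Real.exp_pos _).le
        rintro r ⟨y, ⟨hyV, -⟩, rfl⟩
        exact Real.exp_le_exp.2 (hosc x y hyV)
    _ = Real.exp (n * η) * ∑ x ∈ E, Real.exp (birk T f n x) := by
        rw [Finset.mul_sum]
        refine Finset.sum_congr rfl fun x _ => ?_
        rw [Real.exp_add, mul_comm]
    _ ≤ Real.exp (n * η) * sepPn T f n δ' K :=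
        mul_le_mul_of_nonneg_left (sum_le_sepPn T f hδ' hEK hsep) (Real.exp_pos _).le

lemma ereal_le_of_forall_pos {a b : EReal} (h : ∀ η : ℝ, 0 < η → a ≤ (η : EReal) + b) :
    a ≤ b := by
  induction b using EReal.rec with
  | bot =>
    have := h 1 one_pos
    simpa using this
  | coe c =>
    induction a using EReal.rec with
    | bot => exact bot_le
    | coe a =>
      refine EReal.coe_le_coe_iff.2 ?_
      refine le_of_forall_pos_le_add fun η hη => ?_
      have := h η hη
      rw [← EReal.coe_add] at this
      have := EReal.coe_le_coe_iff.1 this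
      linarith
    | top =>
      have := h 1 one_pos
      rw [← EReal.coe_add] at this
      exact absurd this (not_le.2 (EReal.coe_lt_top _))
  | top => exact le_top


end stmt4helpers

/-- For a TDS `(X,T)` and `f ∈ C(X,ℝ)`, for each `x ∈ X` and
`ε > 0`, `P_s(T,f,x,ε) = sup_𝒰 limsup_n (1/n) log P_n(T,f,𝒰,T^{-n}W^s_ε(x,T))`,
the sup being over finite open covers of `X`. -/
theorem stmt4 [MetricSpace X] [CompactSpace X] [MeasurableSpace X] [BorelSpace X]
    (T : X ≃ₜ X) (f : C(X, ℝ)) (x : X) (ε : ℝ) (hε : 0 < ε) :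
    Ps ⇑T ⇑f x ε =
      ⨆ (𝒰 : Finset (Set X)) (_ : IsOpenCover 𝒰), atTop.limsup fun n : ℕ =>
        ((Real.log (covPn ⇑T ⇑f 𝒰 n (((⇑T)^[n]) ⁻¹' epsStable ⇑T ε x)) / n : ℝ) : EReal) := by
  have hT : Continuous (⇑T) := T.continuous
  set Kn : ℕ → Set X := fun n => ((⇑T)^[n]) ⁻¹' epsStable ⇑T ε x with hKndef
  have hKne : ∀ n, (Kn n).Nonempty := by
    intro n
    refine ⟨(⇑T.symm)^[n] x, ?_⟩
    have hli : Function.LeftInverse ⇑T ⇑T.symm := T.apply_symm_apply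
    have h1 : (⇑T)^[n] ((⇑T.symm)^[n] x) = x := hli.iterate n x
    simp only [hKndef, mem_preimage, h1]
    intro m
    simpa [dist_self] using hε.le
  rw [Ps]
  apply le_antisymm
  · refine iSup₂_le fun δ hδ => ?_
    obtain ⟨𝒰, h𝒰, hmesh⟩ := exists_mesh_cover (X := X) hδ
    refine le_trans ?_ (le_iSup₂ (f := fun 𝒰 (_ : IsOpenCover 𝒰) => atTop.limsup fun n : ℕ =>
      ((Real.log (covPn ⇑T ⇑f 𝒰 n (((⇑T)^[n]) ⁻¹' epsStable ⇑T ε x)) / n : ℝ) : EReal)) 𝒰 h𝒰)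
    refine limsup_le_limsup (Eventually.of_forall fun n => ?_)
    rcases Nat.eq_zero_or_pos n with rfl | hn
    · simp
    · refine EReal.coe_le_coe_iff.2 ?_
      have h1 : 0 < sepPn ⇑T ⇑f n δ (Kn n) := sepPn_pos ⇑T f hδ (hKne n)
      have h2 : sepPn ⇑T ⇑f n δ (Kn n) ≤ covPn ⇑T ⇑f 𝒰 n (Kn n) :=
        sepPn_le_covPn hT f h𝒰 hδ hmesh n (Kn n)
      have h3 : Real.log (sepPn ⇑T ⇑f n δ (Kn n)) ≤ Real.log (covPn ⇑T ⇑f 𝒰 n (Kn n)) :=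
        Real.log_le_log h1 h2
      have hn' : (0:ℝ) < (n : ℝ) := by exact_mod_cast hn
      exact div_le_div_of_nonneg_right h3 hn'.le
  · refine iSup₂_le fun 𝒰 h𝒰 => ?_
    refine ereal_le_of_forall_pos fun η hη => ?_
    obtain ⟨δ', hδ', hkey⟩ := covPn_le_exp_mul_sepPn hT f h𝒰 hη
    have hpt : ∀ n : ℕ,
        ((Real.log (covPn ⇑T ⇑f 𝒰 n (((⇑T)^[n]) ⁻¹' epsStable ⇑T ε x)) / n : ℝ) : EReal) ≤
        ((fun _ : ℕ => (η : EReal)) + fun n : ℕ =>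
          ((Real.log (sepPn ⇑T ⇑f n δ' (Kn n)) / n : ℝ) : EReal)) n := by
      intro n
      simp only [Pi.add_apply]
      rcases Nat.eq_zero_or_pos n with rfl | hn
      · simp only [Nat.cast_zero, div_zero, EReal.coe_zero]
        rw [← EReal.coe_zero, ← EReal.coe_add, EReal.coe_le_coe_iff]
        linarith
      · rw [← EReal.coe_add]
        refine EReal.coe_le_coe_iff.2 ?_
        have hcov : 0 < covPn ⇑T ⇑f 𝒰 n (Kn n) := covPn_pos hT f h𝒰 (hKne n)
        have hsep : 0 < sepPn ⇑T ⇑f n δ' (Kn n) := sepPn_pos ⇑T f hδ' (hKne n)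
        have hlog := Real.log_le_log hcov (hkey n (Kn n) (hKne n))
        rw [Real.log_mul (Real.exp_ne_zero _) hsep.ne', Real.log_exp] at hlog
        have hn' : (0:ℝ) < (n : ℝ) := by exact_mod_cast hn
        calc Real.log (covPn ⇑T ⇑f 𝒰 n (Kn n)) / n
            ≤ ((n : ℝ) * η + Real.log (sepPn ⇑T ⇑f n δ' (Kn n))) / n :=
              div_le_div_of_nonneg_right hlog hn'.le
          _ = η + Real.log (sepPn ⇑T ⇑f n δ' (Kn n)) / n := by
              rw [add_div, mul_div_cancel_left₀ _ hn'.ne']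
    calc atTop.limsup (fun n : ℕ =>
          ((Real.log (covPn ⇑T ⇑f 𝒰 n (((⇑T)^[n]) ⁻¹' epsStable ⇑T ε x)) / n : ℝ) : EReal))
        ≤ atTop.limsup ((fun _ : ℕ => (η : EReal)) + fun n : ℕ =>
            ((Real.log (sepPn ⇑T ⇑f n δ' (Kn n)) / n : ℝ) : EReal)) :=
          limsup_le_limsup (Eventually.of_forall hpt)
      _ ≤ atTop.limsup (fun _ : ℕ => (η : EReal)) + atTop.limsup (fun n : ℕ =>
            ((Real.log (sepPn ⇑T ⇑f n δ' (Kn n)) / n : ℝ) : EReal)) := by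
          refine EReal.limsup_add_le (Or.inl ?_) (Or.inl ?_) <;>
            rw [limsup_const] <;> simp
      _ = (η : EReal) + atTop.limsup (fun n : ℕ =>
            ((Real.log (sepPn ⇑T ⇑f n δ' (Kn n)) / n : ℝ) : EReal)) := by
          rw [limsup_const]
      _ ≤ (η : EReal) + ⨆ (δ : ℝ) (_ : 0 < δ), atTop.limsup (fun n : ℕ =>
            ((Real.log (sepPn ⇑T ⇑f n δ (Kn n)) / n : ℝ) : EReal)) := by
          refine add_le_add_right ?_ _
          exact le_iSup₂ (f := fun δ (_ : 0 < δ) => atTop.limsup fun n : ℕ =>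
            ((Real.log (sepPn ⇑T ⇑f n δ (Kn n)) / n : ℝ) : EReal)) δ' hδ'
end
end

section
/- Let X be a compact metric space, T : X → X a surjective continuous map, and f ∈ C(X,ℝ). Then for each finite open cover 𝒰 of X, each compact subset K of X, and all n, m ∈ ℕ, P_{n+m}(T,f,𝒰,K) ≤ P_m(T,f,𝒰,K) · P_n(T,f∘T^m,T^{-m}𝒰,K), where T^{-m}𝒰 = { T^{-m}U : U ∈ 𝒰 }. -/
open Filter Set Topology MeasureTheory

noncomputable section

variable {X : Type*}

section Stmt15Aux

open Real

lemma sum_image_le_real {α β : Type*} [DecidableEq β] (s : Finset α) (F : α → β) (g : β → ℝ)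
    (hg : ∀ b, 0 ≤ g b) : ∑ b ∈ s.image F, g b ≤ ∑ a ∈ s, g (F a) := by
  classical
  induction s using Finset.induction_on with
  | empty => simp
  | insert a s ha ih =>
    rw [Finset.image_insert, Finset.sum_insert ha]
    by_cases hfa : F a ∈ s.image F
    · rw [Finset.insert_eq_self.2 hfa]
      exact ih.trans (le_add_of_nonneg_left (hg _))
    · rw [Finset.sum_insert hfa]
      exact add_le_add_right ih _

lemma csInf_mul_csInf {c : ℝ} {s t : Set ℝ} (hs : s.Nonempty) (ht : t.Nonempty)
    (hs0 : ∀ x ∈ s, 0 ≤ x) (ht0 : ∀ y ∈ t, 0 ≤ y)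
    (h : ∀ x ∈ s, ∀ y ∈ t, c ≤ x * y) : c ≤ sInf s * sInf t := by
  have hb0 : 0 ≤ sInf t := le_csInf ht ht0
  have key : ∀ x ∈ s, c ≤ x * sInf t := by
    intro x hx
    rcases eq_or_lt_of_le (hs0 x hx) with hx0 | hx0
    · obtain ⟨y, hy⟩ := ht
      have h1 := h x hx y hy
      rw [← hx0] at h1 ⊢
      simpa using h1
    · have hdiv : c / x ≤ sInf t := by
        refine le_csInf ht fun y hy => ?_
        rw [div_le_iff₀ hx0]
        simpa [mul_comm] using h x hx y hy
      calc c = c / x * x := by field_simp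
        _ ≤ sInf t * x := by exact mul_le_mul_of_nonneg_right hdiv hx0.le
        _ = x * sInf t := mul_comm _ _
  rcases eq_or_lt_of_le hb0 with hb | hb
  · obtain ⟨x, hx⟩ := hs
    have := key x hx
    rw [← hb] at this ⊢
    simpa using this
  · have : ∀ x ∈ s, c / sInf t ≤ x := by
      intro x hx
      rw [div_le_iff₀ hb]
      exact key x hx
    have h2 : c / sInf t ≤ sInf s := le_csInf hs this
    calc c = c / sInf t * sInf t := by field_simp
      _ ≤ sInf s * sInf t := mul_le_mul_of_nonneg_right h2 hb.le

end Stmt15Aux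

section Stmt15Main

/-- The defining set of `covPn`. -/
def covSet [MeasurableSpace X] (T : X → X) (f : X → ℝ) (𝒰 : Finset (Set X)) (k : ℕ)
    (K : Set X) : Set ℝ :=
  { r : ℝ | ∃ 𝒱 : Finset (Set X), IsBorelCover 𝒱 ∧ RefinesIter T 𝒰 k 𝒱 ∧
    r = ∑ V ∈ 𝒱, sSup ((fun x => Real.exp (birk T f k x)) '' (V ∩ K)) }

lemma covPn_eq_sInf [MeasurableSpace X] (T : X → X) (f : X → ℝ) (𝒰 : Finset (Set X))
    (k : ℕ) (K : Set X) : covPn T f 𝒰 k K = sInf (covSet T f 𝒰 k K) := rfl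

lemma birk_add (T : X → X) (f : X → ℝ) (m n : ℕ) (x : X) :
    birk T f (m + n) x = birk T f m x + birk T (fun y => f (T^[m] y)) n x := by
  unfold birk
  rw [Finset.sum_range_add]
  refine congrArg _ (Finset.sum_congr rfl fun j _ => ?_)
  rw [Function.iterate_add_apply]

lemma sSup_exp_birk_nonneg [MeasurableSpace X] (T : X → X) (f : X → ℝ) (k : ℕ) (A : Set X) :
    0 ≤ sSup ((fun x => Real.exp (birk T f k x)) '' A) := by
  refine Real.sSup_nonneg ?_
  rintro r ⟨x, -, rfl⟩
  positivity

lemma covSet_nonneg [MeasurableSpace X] {T : X → X} {f : X → ℝ} {𝒰 : Finset (Set X)} {k : ℕ}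
    {K : Set X} {r : ℝ} (hr : r ∈ covSet T f 𝒰 k K) : 0 ≤ r := by
  obtain ⟨𝒱, -, -, rfl⟩ := hr
  exact Finset.sum_nonneg fun V _ => sSup_exp_birk_nonneg T f k _

lemma bddAbove_exp_birk [MetricSpace X] [CompactSpace X] {T : X → X} (hT : Continuous T)
    {f : X → ℝ} (hf : Continuous f) (k : ℕ) (A : Set X) :
    BddAbove ((fun x => Real.exp (birk T f k x)) '' A) := by
  have hc : Continuous fun x => Real.exp (birk T f k x) := by
    refine Real.continuous_exp.comp ?_
    unfold birk
    exact continuous_finset_sum _ fun j _ => hf.comp (hT.iterate j)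
  exact BddAbove.mono (Set.image_subset_range _ _) (isCompact_range hc).bddAbove

lemma covSet_nonempty_s15 [MetricSpace X] [MeasurableSpace X] [BorelSpace X]
    {T : X → X} (hT : Continuous T) (f : X → ℝ) {𝒲 : Finset (Set X)}
    (hm : ∀ W ∈ 𝒲, MeasurableSet W) (hcov : ⋃₀ (𝒲 : Set (Set X)) = univ)
    (k : ℕ) (K : Set X) : (covSet T f 𝒲 k K).Nonempty := by
  classical
  refine ⟨_, Finset.image
    (fun g : Fin k → {U // U ∈ 𝒲} => ⋂ i : Fin k, (T^[(i : ℕ)]) ⁻¹' (g i : Set X))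
    Finset.univ, ⟨?_, ?_⟩, ?_, rfl⟩
  · intro V hV
    obtain ⟨g, -, rfl⟩ := Finset.mem_image.1 hV
    exact MeasurableSet.iInter fun i => (hm _ (g i).2).preimage (hT.iterate _).measurable
  · ext x
    simp only [mem_univ, iff_true, mem_sUnion]
    have hg : ∀ i : Fin k, ∃ U : {U // U ∈ 𝒲}, T^[(i : ℕ)] x ∈ (U : Set X) := by
      intro i
      have : T^[(i : ℕ)] x ∈ ⋃₀ (𝒲 : Set (Set X)) := by rw [hcov]; trivial
      obtain ⟨U, hU, hxU⟩ := this
      exact ⟨⟨U, hU⟩, hxU⟩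
    choose g hgx using hg
    exact ⟨_, Finset.mem_coe.2 (Finset.mem_image_of_mem _ (Finset.mem_univ g)),
      mem_iInter.2 hgx⟩
  · intro V hV
    obtain ⟨g, -, rfl⟩ := Finset.mem_image.1 hV
    exact ⟨fun i => (g i : Set X), fun i => (g i).2, subset_rfl⟩

lemma covPn_le_mul [MetricSpace X] [CompactSpace X] [MeasurableSpace X] [BorelSpace X]
    {T : X → X} (hT : Continuous T) {f : X → ℝ} (hf : Continuous f)
    {𝒰 𝒰' : Finset (Set X)} {m n : ℕ}
    (h𝒰' : ∀ W ∈ 𝒰', ∃ U ∈ 𝒰, T^[m] ⁻¹' U = W) (K : Set X)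
    {r₁ r₂ : ℝ} (hr₁ : r₁ ∈ covSet T f 𝒰 m K)
    (hr₂ : r₂ ∈ covSet T (fun x => f (T^[m] x)) 𝒰' n K) :
    covPn T f 𝒰 (n + m) K ≤ r₁ * r₂ := by
  classical
  obtain ⟨𝒱₁, hB₁, hR₁, rfl⟩ := hr₁
  obtain ⟨𝒱₂, hB₂, hR₂, rfl⟩ := hr₂
  set f' : X → ℝ := fun x => f (T^[m] x) with hf'
  set 𝒱 : Finset (Set X) := (𝒱₁ ×ˢ 𝒱₂).image (fun p => p.1 ∩ p.2) with h𝒱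
  have hmem : (∑ V ∈ 𝒱, sSup ((fun x => Real.exp (birk T f (n + m) x)) '' (V ∩ K)))
      ∈ covSet T f 𝒰 (n + m) K := by
    refine ⟨𝒱, ⟨?_, ?_⟩, ?_, rfl⟩
    · intro V hV
      obtain ⟨p, hp, rfl⟩ := Finset.mem_image.1 hV
      obtain ⟨hp1, hp2⟩ := Finset.mem_product.1 hp
      exact (hB₁.1 _ hp1).inter (hB₂.1 _ hp2)
    · ext x
      simp only [mem_univ, iff_true, mem_sUnion]
      have hx1 : x ∈ ⋃₀ (𝒱₁ : Set (Set X)) := by rw [hB₁.2]; trivial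
      have hx2 : x ∈ ⋃₀ (𝒱₂ : Set (Set X)) := by rw [hB₂.2]; trivial
      obtain ⟨V₁, hV₁, hxV₁⟩ := hx1
      obtain ⟨V₂, hV₂, hxV₂⟩ := hx2
      refine ⟨V₁ ∩ V₂, Finset.mem_coe.2 (Finset.mem_image.2
        ⟨(V₁, V₂), Finset.mem_product.2 ⟨hV₁, hV₂⟩, rfl⟩), hxV₁, hxV₂⟩
    · intro V hV
      obtain ⟨p, hp, rfl⟩ := Finset.mem_image.1 hV
      obtain ⟨hp1, hp2⟩ := Finset.mem_product.1 hp
      obtain ⟨g₁, hg₁, hs₁⟩ := hR₁ p.1 hp1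
      obtain ⟨g₂, hg₂, hs₂⟩ := hR₂ p.2 hp2
      choose U hU hUe using fun i : Fin n => h𝒰' (g₂ i) (hg₂ i)
      refine ⟨fun i : Fin (n + m) =>
        if h : (i : ℕ) < m then g₁ ⟨i, h⟩ else U ⟨(i : ℕ) - m, by omega⟩, ?_, ?_⟩
      · intro i
        dsimp only
        split_ifs with h
        · exact hg₁ _
        · exact hU _
      · intro x hx
        refine mem_iInter.2 fun i => ?_
        dsimp only [Set.mem_preimage]
        split_ifs with h
        · exact mem_iInter.1 (hs₁ hx.1) ⟨i, h⟩
        · have h1 : T^[(i : ℕ) - m] x ∈ g₂ ⟨(i : ℕ) - m, by omega⟩ :=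
            mem_iInter.1 (hs₂ hx.2) ⟨(i : ℕ) - m, by omega⟩
          rw [← hUe ⟨(i : ℕ) - m, by omega⟩] at h1
          have h2 : T^[m] (T^[(i : ℕ) - m] x) ∈ U ⟨(i : ℕ) - m, by omega⟩ := h1
          rwa [← Function.iterate_add_apply, show m + ((i : ℕ) - m) = (i : ℕ) by omega] at h2
  have hbdd : BddBelow (covSet T f 𝒰 (n + m) K) := ⟨0, fun r hr => covSet_nonneg hr⟩
  refine (csInf_le hbdd hmem).trans ?_
  have step1 : (∑ V ∈ 𝒱, sSup ((fun x => Real.exp (birk T f (n + m) x)) '' (V ∩ K)))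
      ≤ ∑ p ∈ 𝒱₁ ×ˢ 𝒱₂,
        sSup ((fun x => Real.exp (birk T f (n + m) x)) '' (p.1 ∩ p.2 ∩ K)) :=
    sum_image_le_real _ _ _ (fun V => sSup_exp_birk_nonneg T f (n + m) (V ∩ K))
  refine step1.trans ?_
  have step2 : ∀ p ∈ 𝒱₁ ×ˢ 𝒱₂,
      sSup ((fun x => Real.exp (birk T f (n + m) x)) '' (p.1 ∩ p.2 ∩ K)) ≤
      sSup ((fun x => Real.exp (birk T f m x)) '' (p.1 ∩ K)) *
      sSup ((fun x => Real.exp (birk T f' n x)) '' (p.2 ∩ K)) := by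
    rintro ⟨V₁, V₂⟩ -
    refine Real.sSup_le ?_ (mul_nonneg (sSup_exp_birk_nonneg T f m _)
      (sSup_exp_birk_nonneg T f' n _))
    rintro r ⟨x, ⟨⟨hxV₁, hxV₂⟩, hxK⟩, rfl⟩
    dsimp only
    have hsplit : Real.exp (birk T f (n + m) x)
        = Real.exp (birk T f m x) * Real.exp (birk T f' n x) := by
      rw [show n + m = m + n by omega, birk_add, Real.exp_add]
    rw [hsplit]
    have h1 : Real.exp (birk T f m x) ≤
        sSup ((fun x => Real.exp (birk T f m x)) '' (V₁ ∩ K)) :=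
      le_csSup (bddAbove_exp_birk hT hf m _) ⟨x, ⟨hxV₁, hxK⟩, rfl⟩
    have h2 : Real.exp (birk T f' n x) ≤
        sSup ((fun x => Real.exp (birk T f' n x)) '' (V₂ ∩ K)) :=
      le_csSup (bddAbove_exp_birk hT (hf.comp (hT.iterate m)) n _) ⟨x, ⟨hxV₂, hxK⟩, rfl⟩
    exact mul_le_mul h1 h2 (Real.exp_nonneg _) (sSup_exp_birk_nonneg T f m _)
  refine (Finset.sum_le_sum step2).trans ?_
  rw [Finset.sum_mul_sum]
  exact (Finset.sum_product (s := 𝒱₁) (t := 𝒱₂)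
    (f := fun p => sSup ((fun x => Real.exp (birk T f m x)) '' (p.1 ∩ K)) *
      sSup ((fun x => Real.exp (birk T f' n x)) '' (p.2 ∩ K)))).le

end Stmt15Main

/-- For a surjective continuous `T` on a compact metric space,
`f ∈ C(X,ℝ)`, a finite open cover `𝒰` and a compact `K ⊆ X`:
`P_{n+m}(T,f,𝒰,K) ≤ P_m(T,f,𝒰,K) · P_n(T, f∘Tᵐ, T^{-m}𝒰, K)`. -/
theorem stmt15 [MetricSpace X] [CompactSpace X] [MeasurableSpace X] [BorelSpace X]
    (T : X → X) (hT : Continuous T) (hTs : Function.Surjective T) (f : C(X, ℝ))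
    (𝒰 : Finset (Set X)) (h𝒰 : IsOpenCover 𝒰) (K : Set X) (hK : IsCompact K)
    (n m : ℕ) :
    covPn T ⇑f 𝒰 (n + m) K ≤
      covPn T ⇑f 𝒰 m K *
        covPn T (fun x => f (T^[m] x))
          (@Finset.image _ _ (Classical.decEq _) (fun U => T^[m] ⁻¹' U) 𝒰) n K := by
    classical
  have h𝒰m : ∀ U ∈ 𝒰, MeasurableSet U := fun U hU => (h𝒰.1 U hU).measurableSet
  set 𝒰' := @Finset.image _ _ (Classical.decEq _) (fun U => T^[m] ⁻¹' U) 𝒰 with h𝒰'def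
  have h𝒰'spec : ∀ W ∈ 𝒰', ∃ U ∈ 𝒰, T^[m] ⁻¹' U = W := fun W hW => Finset.mem_image.1 hW
  have h𝒰'm : ∀ W ∈ 𝒰', MeasurableSet W := by
    intro W hW
    obtain ⟨U, hU, rfl⟩ := h𝒰'spec W hW
    exact (h𝒰m U hU).preimage (hT.iterate m).measurable
  have h𝒰'cov : ⋃₀ (𝒰' : Set (Set X)) = univ := by
    ext x
    simp only [mem_univ, iff_true, mem_sUnion]
    have hx : T^[m] x ∈ ⋃₀ (𝒰 : Set (Set X)) := by rw [h𝒰.2]; trivial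
    obtain ⟨U, hU, hxU⟩ := hx
    exact ⟨T^[m] ⁻¹' U, Finset.mem_coe.2 (Finset.mem_image_of_mem _ hU), hxU⟩
  rw [covPn_eq_sInf, covPn_eq_sInf, covPn_eq_sInf]
  exact csInf_mul_csInf
    (covSet_nonempty_s15 hT _ h𝒰m h𝒰.2 m K)
    (covSet_nonempty_s15 hT _ h𝒰'm h𝒰'cov n K)
    (fun x hx => covSet_nonneg hx) (fun y hy => covSet_nonneg hy)
    (fun x hx y hy => covPn_le_mul hT f.continuous h𝒰'spec K hx hy)
end
end
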